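/- Update answer sets violate syntax-independence (postulates K6/U4): there are programs P_1, P_2, P_2' with P_2 ≡ P_2' (same belief sets) but Bel((P_1,P_2)) ≠ Bel((P_1,P_2')). Witness: P_1 = { a ←, b ← }, P_2 = { ¬a ← b }, P_2' = { ¬b ← a }; then {¬a, b} is an update answer set of (P_1,P_2) but not of (P_1,P_2'). -/

import Mathlib

/-- A literal over atoms `α`: an atom or a strongly negated atom. -/
inductive Lit (α : Type) where
  | pos : α → Lit α
  | neg : α → Lit α

/-- The complementary literal. -/
def Lit.compl {α : Type} : Lit α → Lit α
  | .pos a => .neg a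
  | .neg a => .pos a

/-- A rule of an extended logic program: optional head literal,
prerequisites `prem`, and weakly negated body literals `nbody`. -/
structure Rule (α : Type) where
  head : Option (Lit α)
  prem : Set (Lit α)
  nbody : Set (Lit α)

/-- A set of literals is consistent iff it contains no complementary pair. -/
def Consistent {α : Type} (S : Set (Lit α)) : Prop :=
  ∀ a : α, ¬ (Lit.pos a ∈ S ∧ Lit.neg a ∈ S)

/-- The body of `r` is true in `S`. -/
def BodyTrue {α : Type} (S : Set (Lit α)) (r : Rule α) : Prop :=
  r.prem ⊆ S ∧ ∀ L ∈ r.nbody, L ∉ S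

/-- The head of `r` is true in `S` (false for constraints). -/
def HeadTrue {α : Type} (S : Set (Lit α)) (r : Rule α) : Prop :=
  ∃ L, r.head = some L ∧ L ∈ S

/-- Rule `r` is true in `S`. -/
def RuleTrue {α : Type} (S : Set (Lit α)) (r : Rule α) : Prop :=
  BodyTrue S r → HeadTrue S r

/-- `S` is a model of program `P`. -/
def IsModel {α : Type} (S : Set (Lit α)) (P : Set (Rule α)) : Prop :=
  ∀ r ∈ P, RuleTrue S r

/-- `r` is defeated by `S`. -/
def Defeated {α : Type} (S : Set (Lit α)) (r : Rule α) : Prop :=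
  ∃ L ∈ r.nbody, L ∈ S

/-- The Gelfond–Lifschitz reduct of `P` relative to `S`. -/
def Reduct {α : Type} (P : Set (Rule α)) (S : Set (Lit α)) : Set (Rule α) :=
  { r' | ∃ r ∈ P, ¬ Defeated S r ∧ r' = Rule.mk r.head r.prem ∅ }

/-- `S` is an answer set of `P`: a consistent set of literals that is a
minimal model of the reduct `P^S`. -/
def IsAnswerSet {α : Type} (P : Set (Rule α)) (S : Set (Lit α)) : Prop :=
  Consistent S ∧ IsModel S (Reduct P S) ∧
    ∀ T ⊆ S, IsModel T (Reduct P S) → T = S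

/-- The belief set of `P`: all rules true in every answer set of `P`. -/
def Bel {α : Type} (P : Set (Rule α)) : Set (Rule α) :=
  { r | ∀ S, IsAnswerSet P S → RuleTrue S r }
/-- Extended alphabet `At*`: original atoms, indexed copies `A_i`,
and rejection atoms `rej(r)` for (named copies of) rules. -/
inductive ExtAtom (α : Type) where
  | base : α → ExtAtom α
  | idx : ℕ → α → ExtAtom α
  | rej : ℕ → Rule α → ExtAtom α

/-- Lift a literal over `α` to the corresponding literal over `At*`. -/
def liftLit {α : Type} : Lit α → Lit (ExtAtom α)
  | .pos a => .pos (.base a)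
  | .neg a => .neg (.base a)

/-- The indexed copy `L_i` of a literal `L`. -/
def idxLit {α : Type} (i : ℕ) : Lit α → Lit (ExtAtom α)
  | .pos a => .pos (.idx i a)
  | .neg a => .neg (.idx i a)

/-- Literal `L` occurs in the update sequence `(P 0, …, P (n-1))`. -/
def OccursIn {α : Type} (n : ℕ) (P : ℕ → Set (Rule α)) (L : Lit α) : Prop :=
  ∃ i < n, ∃ r ∈ P i, r.head = some L ∨ L ∈ r.prem ∨ L ∈ r.nbody

/-- The update program `P_◁` of the update sequence `(P 0, …, P (n-1))`,
an ELP over the extended alphabet `At*`. -/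
def UpdProgram {α : Type} (n : ℕ) (P : ℕ → Set (Rule α)) : Set (Rule (ExtAtom α)) :=
  -- (i) all constraints
  { r' | ∃ i < n, ∃ r ∈ P i, r.head = none ∧
      r' = Rule.mk none (liftLit '' r.prem) (liftLit '' r.nbody) } ∪
  -- (ii)  L_i ← B(r), not rej(r)
  { r' | ∃ i < n, ∃ r ∈ P i, ∃ L, r.head = some L ∧
      r' = Rule.mk (some (idxLit i L)) (liftLit '' r.prem)
             ((liftLit '' r.nbody) ∪ {Lit.pos (ExtAtom.rej i r)}) } ∪
  -- (iii)  rej(r) ← B(r), ¬L_{i+1}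
  { r' | ∃ i, i + 1 < n ∧ ∃ r ∈ P i, ∃ L, r.head = some L ∧
      r' = Rule.mk (some (Lit.pos (ExtAtom.rej i r)))
             ((liftLit '' r.prem) ∪ {idxLit (i+1) L.compl}) (liftLit '' r.nbody) } ∪
  -- (iv) inertia rules  L_i ← L_{i+1}  and  L ← L_1
  { r' | ∃ L, OccursIn n P L ∧
      ((∃ i, i + 1 < n ∧ r' = Rule.mk (some (idxLit i L)) {idxLit (i+1) L} ∅) ∨
        r' = Rule.mk (some (liftLit L)) {idxLit 0 L} ∅) }

/-- `S` is an update answer set of the sequence `(P 0, …, P (n-1))`: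
the restriction to `Lit_At` of an answer set of the update program. -/
def UpdateAnswerSet {α : Type} (n : ℕ) (P : ℕ → Set (Rule α)) (S : Set (Lit α)) : Prop :=
  ∃ S' : Set (Lit (ExtAtom α)), IsAnswerSet (UpdProgram n P) S' ∧
    S = { L | liftLit L ∈ S' }

/-- Two rules are conflicting iff their heads are complementary literals. -/
def Conflicting {α : Type} (r r' : Rule α) : Prop :=
  ∃ L, r.head = some L ∧ r'.head = some L.compl

/-- The founded rejection set at level `i`: rules of `P i` rejected by a
conflicting, itself non-rejected rule of some later program. -/
def RejLevel {α : Type} (n : ℕ) (P : ℕ → Set (Rule α)) (S : Set (Lit α)) (i : ℕ) :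
    Set (Rule α) :=
  { r | r ∈ P i ∧ ∃ j, ∃ _ : i < j, ∃ _ : j < n, ∃ r',
      r' ∈ P j ∧ r' ∉ RejLevel n P S j ∧
      Conflicting r r' ∧ BodyTrue S r ∧ BodyTrue S r' }
  termination_by n - i
  decreasing_by omega

/-- The founded rejection set `Rej(S, P⃗)`. -/
def Rej {α : Type} (n : ℕ) (P : ℕ → Set (Rule α)) (S : Set (Lit α)) : Set (Rule α) :=
  { r | ∃ i < n, r ∈ RejLevel n P S i }

/-- The union `∪P⃗` of all rules of the sequence. -/
def UnionSeq {α : Type} (n : ℕ) (P : ℕ → Set (Rule α)) : Set (Rule α) :=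
  { r | ∃ i < n, r ∈ P i }

/-- The belief set of an update sequence: all rules true in every update
answer set. -/
def BelSeq {α : Type} (n : ℕ) (P : ℕ → Set (Rule α)) : Set (Rule α) :=
  { r | ∀ S, UpdateAnswerSet n P S → RuleTrue S r }

/-- Witness `P_1 = { a ←, b ← }` (atom `a` is `true`, `b` is `false`). -/
def P1w : Set (Rule Bool) :=
  {Rule.mk (some (Lit.pos true)) ∅ ∅, Rule.mk (some (Lit.pos false)) ∅ ∅}

/-- Witness `P_2 = { ¬a ← b }`. -/
def P2w : Set (Rule Bool) :=
  {Rule.mk (some (Lit.neg true)) {Lit.pos false} ∅}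

/-- Witness `P_2' = { ¬b ← a }`. -/
def P2w' : Set (Rule Bool) :=
  {Rule.mk (some (Lit.neg false)) {Lit.pos true} ∅}


section AuxK6

/-- First conjunct: answer sets of a single-rule program with nonempty body. -/
lemma isAnswerSet_single_iff (L M : Lit Bool) (S : Set (Lit Bool)) :
    IsAnswerSet ({Rule.mk (some L) {M} ∅} : Set (Rule Bool)) S ↔ S = ∅ := by
  constructor
  · rintro ⟨-, -, hmin⟩
    refine (hmin ∅ (Set.empty_subset S) ?_).symm
    rintro r ⟨r0, hr0, -, rfl⟩ hb
    simp only [Set.mem_singleton_iff] at hr0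
    subst hr0
    exact absurd (hb.1 rfl) (Set.notMem_empty M)
  · rintro rfl
    refine ⟨fun a h => (Set.notMem_empty _ h.1).elim, ?_,
      fun T hT _ => Set.subset_empty_iff.mp hT⟩
    rintro r ⟨r0, hr0, -, rfl⟩ hb
    simp only [Set.mem_singleton_iff] at hr0
    subst hr0
    exact absurd (hb.1 rfl) (Set.notMem_empty M)

lemma bel_eq_aux : Bel P2w = Bel P2w' := by
  ext r
  simp only [Bel, Set.mem_setOf_eq, P2w, P2w']
  constructor
  · intro h S hS
    rw [(isAnswerSet_single_iff _ _ _).mp hS]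
    exact h ∅ ((isAnswerSet_single_iff _ _ _).mpr rfl)
  · intro h S hS
    rw [(isAnswerSet_single_iff _ _ _).mp hS]
    exact h ∅ ((isAnswerSet_single_iff _ _ _).mpr rfl)

/-- Named copies of the witness rules. -/
def raw : Rule Bool := Rule.mk (some (Lit.pos true)) ∅ ∅
def rbw : Rule Bool := Rule.mk (some (Lit.pos false)) ∅ ∅
def rcw : Rule Bool := Rule.mk (some (Lit.neg true)) {Lit.pos false} ∅
def rcw' : Rule Bool := Rule.mk (some (Lit.neg false)) {Lit.pos true} ∅

/-- The intended answer set of the update program of `(P1w, P2w)`. -/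
def Sw : Set (Lit (ExtAtom Bool)) :=
  {Lit.pos (ExtAtom.idx 0 false), Lit.pos (ExtAtom.base false),
   Lit.neg (ExtAtom.idx 1 true), Lit.pos (ExtAtom.rej 0 raw),
   Lit.neg (ExtAtom.idx 0 true), Lit.neg (ExtAtom.base true)}

lemma mem_Sw (L : Lit (ExtAtom Bool)) : L ∈ Sw ↔
    (L = Lit.pos (ExtAtom.idx 0 false) ∨ L = Lit.pos (ExtAtom.base false) ∨
     L = Lit.neg (ExtAtom.idx 1 true) ∨ L = Lit.pos (ExtAtom.rej 0 raw) ∨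
     L = Lit.neg (ExtAtom.idx 0 true) ∨ L = Lit.neg (ExtAtom.base true)) := by
  simp [Sw]

def Pseq : ℕ → Set (Rule Bool) := fun i => if i = 0 then P1w else P2w
def Pseq' : ℕ → Set (Rule Bool) := fun i => if i = 0 then P1w else P2w'

lemma occurs_seq {L : Lit Bool} (h : OccursIn 2 Pseq L) :
    L = Lit.pos true ∨ L = Lit.pos false ∨ L = Lit.neg true := by
  obtain ⟨i, hi, r, hr, hL⟩ := h
  interval_cases i <;> simp [Pseq, P1w, P2w] at hr
  · rcases hr with rfl | rfl <;> simp_all <;> tauto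
  · subst hr; simp_all <;> tauto

lemma occurs_seq' {L : Lit Bool} (h : OccursIn 2 Pseq' L) :
    L = Lit.pos true ∨ L = Lit.pos false ∨ L = Lit.neg false := by
  obtain ⟨i, hi, r, hr, hL⟩ := h
  interval_cases i <;> simp [Pseq', P1w, P2w'] at hr
  · rcases hr with rfl | rfl <;> simp_all <;> tauto
  · subst hr; simp_all <;> tauto

lemma mem_upd_seq {r' : Rule (ExtAtom Bool)} (h : r' ∈ UpdProgram 2 Pseq) :
    r' = ⟨some (.pos (.idx 0 true)), ∅, {.pos (.rej 0 raw)}⟩ ∨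
    r' = ⟨some (.pos (.idx 0 false)), ∅, {.pos (.rej 0 rbw)}⟩ ∨
    r' = ⟨some (.neg (.idx 1 true)), {.pos (.base false)}, {.pos (.rej 1 rcw)}⟩ ∨
    r' = ⟨some (.pos (.rej 0 raw)), {.neg (.idx 1 true)}, ∅⟩ ∨
    r' = ⟨some (.pos (.rej 0 rbw)), {.neg (.idx 1 false)}, ∅⟩ ∨
    (∃ L : Lit Bool, (L = Lit.pos true ∨ L = Lit.pos false ∨ L = Lit.neg true) ∧
      (r' = ⟨some (idxLit 0 L), {idxLit 1 L}, ∅⟩ ∨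
       r' = ⟨some (liftLit L), {idxLit 0 L}, ∅⟩)) := by
  rcases h with ((h | h) | h) | h
  · obtain ⟨i, hi, r, hr, hhead, rfl⟩ := h
    exfalso
    interval_cases i <;> simp [Pseq, P1w, P2w] at hr
    · rcases hr with rfl | rfl <;> simp at hhead
    · subst hr; simp at hhead
  · obtain ⟨i, hi, r, hr, L, hL, rfl⟩ := h
    interval_cases i <;> simp [Pseq, P1w, P2w] at hr
    · rcases hr with rfl | rfl
      · injection hL with hL; subst hL
        left; simp [raw, idxLit, liftLit]
      · injection hL with hL; subst hL
        right; left; simp [rbw, idxLit, liftLit]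
    · subst hr
      injection hL with hL; subst hL
      right; right; left; simp [rcw, idxLit, liftLit]
  · obtain ⟨i, hi, r, hr, L, hL, rfl⟩ := h
    have h0 : i = 0 := by omega
    subst h0
    simp [Pseq, P1w] at hr
    rcases hr with rfl | rfl
    · injection hL with hL; subst hL
      right; right; right; left; simp [raw, Lit.compl, idxLit]
    · injection hL with hL; subst hL
      right; right; right; right; left; simp [rbw, Lit.compl, idxLit]
  · obtain ⟨L, hOcc, hcase⟩ := h
    have hL3 := occurs_seq hOcc
    rcases hcase with ⟨i, hi, rfl⟩ | rfl
    · have h0 : i = 0 := by omega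
      subst h0
      exact Or.inr (Or.inr (Or.inr (Or.inr (Or.inr ⟨L, hL3, Or.inl rfl⟩))))
    · exact Or.inr (Or.inr (Or.inr (Or.inr (Or.inr ⟨L, hL3, Or.inr rfl⟩))))

lemma mem_upd_seq' {r' : Rule (ExtAtom Bool)} (h : r' ∈ UpdProgram 2 Pseq') :
    r' = ⟨some (.pos (.idx 0 true)), ∅, {.pos (.rej 0 raw)}⟩ ∨
    r' = ⟨some (.pos (.idx 0 false)), ∅, {.pos (.rej 0 rbw)}⟩ ∨
    r' = ⟨some (.neg (.idx 1 false)), {.pos (.base true)}, {.pos (.rej 1 rcw')}⟩ ∨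
    r' = ⟨some (.pos (.rej 0 raw)), {.neg (.idx 1 true)}, ∅⟩ ∨
    r' = ⟨some (.pos (.rej 0 rbw)), {.neg (.idx 1 false)}, ∅⟩ ∨
    (∃ L : Lit Bool, (L = Lit.pos true ∨ L = Lit.pos false ∨ L = Lit.neg false) ∧
      (r' = ⟨some (idxLit 0 L), {idxLit 1 L}, ∅⟩ ∨
       r' = ⟨some (liftLit L), {idxLit 0 L}, ∅⟩)) := by
  rcases h with ((h | h) | h) | h
  · obtain ⟨i, hi, r, hr, hhead, rfl⟩ := h
    exfalso
    interval_cases i <;> simp [Pseq', P1w, P2w'] at hr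
    · rcases hr with rfl | rfl <;> simp at hhead
    · subst hr; simp at hhead
  · obtain ⟨i, hi, r, hr, L, hL, rfl⟩ := h
    interval_cases i <;> simp [Pseq', P1w, P2w'] at hr
    · rcases hr with rfl | rfl
      · injection hL with hL; subst hL
        left; simp [raw, idxLit, liftLit]
      · injection hL with hL; subst hL
        right; left; simp [rbw, idxLit, liftLit]
    · subst hr
      injection hL with hL; subst hL
      right; right; left; simp [rcw', idxLit, liftLit]
  · obtain ⟨i, hi, r, hr, L, hL, rfl⟩ := h
    have h0 : i = 0 := by omega
    subst h0
    simp [Pseq', P1w] at hr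
    rcases hr with rfl | rfl
    · injection hL with hL; subst hL
      right; right; right; left; simp [raw, Lit.compl, idxLit]
    · injection hL with hL; subst hL
      right; right; right; right; left; simp [rbw, Lit.compl, idxLit]
  · obtain ⟨L, hOcc, hcase⟩ := h
    have hL3 := occurs_seq' hOcc
    rcases hcase with ⟨i, hi, rfl⟩ | rfl
    · have h0 : i = 0 := by omega
      subst h0
      exact Or.inr (Or.inr (Or.inr (Or.inr (Or.inr ⟨L, hL3, Or.inl rfl⟩))))
    · exact Or.inr (Or.inr (Or.inr (Or.inr (Or.inr ⟨L, hL3, Or.inr rfl⟩))))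

lemma Sw_consistent : Consistent Sw := by
  rintro a ⟨h1, h2⟩
  rw [mem_Sw] at h1 h2
  rcases h1 with h | h | h | h | h | h <;> rcases h2 with g | g | g | g | g | g <;>
    simp_all

lemma Sw_model : IsModel Sw (Reduct (UpdProgram 2 Pseq) Sw) := by
  rintro r ⟨r0, hr0, hnd, rfl⟩ hb
  rcases mem_upd_seq hr0 with rfl | rfl | rfl | rfl | rfl | ⟨L, hL3, rfl | rfl⟩
  · -- A0 is defeated
    exact absurd ⟨Lit.pos (ExtAtom.rej 0 raw), rfl, (mem_Sw _).mpr (by tauto)⟩ hnd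
  · exact ⟨_, rfl, (mem_Sw _).mpr (by tauto)⟩
  · exact ⟨_, rfl, (mem_Sw _).mpr (by tauto)⟩
  · exact ⟨_, rfl, (mem_Sw _).mpr (by tauto)⟩
  · exact absurd ((mem_Sw _).mp (hb.1 rfl)) (by simp)
  · rcases hL3 with rfl | rfl | rfl
    · exact absurd ((mem_Sw _).mp (hb.1 rfl)) (by simp [idxLit])
    · exact absurd ((mem_Sw _).mp (hb.1 rfl)) (by simp [idxLit])
    · exact ⟨_, rfl, (mem_Sw _).mpr (by simp [idxLit])⟩
  · rcases hL3 with rfl | rfl | rfl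
    · exact absurd ((mem_Sw _).mp (hb.1 rfl)) (by simp [idxLit])
    · exact ⟨_, rfl, (mem_Sw _).mpr (by simp [liftLit])⟩
    · exact ⟨_, rfl, (mem_Sw _).mpr (by simp [liftLit])⟩

lemma memB0 : (⟨some (.pos (.idx 0 false)), ∅, {.pos (.rej 0 rbw)}⟩ :
    Rule (ExtAtom Bool)) ∈ UpdProgram 2 Pseq := by
  refine Or.inl (Or.inl (Or.inr ⟨0, by norm_num, rbw, by simp [Pseq, P1w, rbw],
    Lit.pos false, rfl, ?_⟩))
  simp [rbw, idxLit]

lemma memC1 : (⟨some (.neg (.idx 1 true)), {.pos (.base false)}, {.pos (.rej 1 rcw)}⟩ :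
    Rule (ExtAtom Bool)) ∈ UpdProgram 2 Pseq := by
  refine Or.inl (Or.inl (Or.inr ⟨1, by norm_num, rcw, by simp [Pseq, P2w, rcw],
    Lit.neg true, rfl, ?_⟩))
  simp [rcw, idxLit, liftLit]

lemma memRA : (⟨some (.pos (.rej 0 raw)), {.neg (.idx 1 true)}, ∅⟩ :
    Rule (ExtAtom Bool)) ∈ UpdProgram 2 Pseq := by
  refine Or.inl (Or.inr ⟨0, by norm_num, raw, by simp [Pseq, P1w, raw],
    Lit.pos true, rfl, ?_⟩)
  simp [raw, Lit.compl, idxLit]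

lemma occ_negt : OccursIn 2 Pseq (Lit.neg true) :=
  ⟨1, by norm_num, rcw, by simp [Pseq, P2w, rcw], Or.inl rfl⟩

lemma occ_posf : OccursIn 2 Pseq (Lit.pos false) :=
  ⟨0, by norm_num, rbw, by simp [Pseq, P1w, rbw], Or.inl rfl⟩

lemma memI0negt : (⟨some (.neg (.idx 0 true)), {.neg (.idx 1 true)}, ∅⟩ :
    Rule (ExtAtom Bool)) ∈ UpdProgram 2 Pseq := by
  refine Or.inr ⟨Lit.neg true, occ_negt, Or.inl ⟨0, by norm_num, ?_⟩⟩
  simp [idxLit]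

lemma memIBnegt : (⟨some (.neg (.base true)), {.neg (.idx 0 true)}, ∅⟩ :
    Rule (ExtAtom Bool)) ∈ UpdProgram 2 Pseq := by
  refine Or.inr ⟨Lit.neg true, occ_negt, Or.inr ?_⟩
  simp [idxLit, liftLit]

lemma memIBposf : (⟨some (.pos (.base false)), {.pos (.idx 0 false)}, ∅⟩ :
    Rule (ExtAtom Bool)) ∈ UpdProgram 2 Pseq := by
  refine Or.inr ⟨Lit.pos false, occ_posf, Or.inr ?_⟩
  simp [idxLit, liftLit]

lemma Sw_min : ∀ T ⊆ Sw, IsModel T (Reduct (UpdProgram 2 Pseq) Sw) → T = Sw := by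
  intro T hT hM
  have apply_rule : ∀ r0 ∈ UpdProgram 2 Pseq, ¬ Defeated Sw r0 → r0.prem ⊆ T →
      ∀ hd, r0.head = some hd → hd ∈ T := by
    intro r0 hr0 hnd hpr hd hhd
    obtain ⟨L, hL, hLT⟩ := hM _ ⟨r0, hr0, hnd, rfl⟩
      ⟨hpr, fun L h => absurd h (Set.notMem_empty L)⟩
    rw [hhd] at hL
    injection hL with hL
    rwa [hL]
  have h1 : Lit.pos (ExtAtom.idx 0 false) ∈ T := by
    refine apply_rule _ memB0 ?_ (Set.empty_subset T) _ rfl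
    rintro ⟨x, hx, hxS⟩
    rw [Set.mem_singleton_iff] at hx
    subst hx
    exact absurd ((mem_Sw _).mp hxS) (by simp [raw, rbw])
  have h2 : Lit.pos (ExtAtom.base false) ∈ T := by
    refine apply_rule _ memIBposf (by rintro ⟨x, hx, -⟩; exact (Set.notMem_empty x hx))
      ?_ _ rfl
    intro x hx
    rw [Set.mem_singleton_iff] at hx
    subst hx; exact h1
  have h3 : Lit.neg (ExtAtom.idx 1 true) ∈ T := by
    refine apply_rule _ memC1 ?_ ?_ _ rfl
    · rintro ⟨x, hx, hxS⟩
      rw [Set.mem_singleton_iff] at hx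
      subst hx
      exact absurd ((mem_Sw _).mp hxS) (by simp [raw, rcw])
    · intro x hx
      rw [Set.mem_singleton_iff] at hx
      subst hx; exact h2
  have h4 : Lit.pos (ExtAtom.rej 0 raw) ∈ T := by
    refine apply_rule _ memRA (by rintro ⟨x, hx, -⟩; exact (Set.notMem_empty x hx))
      ?_ _ rfl
    intro x hx
    rw [Set.mem_singleton_iff] at hx
    subst hx; exact h3
  have h5 : Lit.neg (ExtAtom.idx 0 true) ∈ T := by
    refine apply_rule _ memI0negt (by rintro ⟨x, hx, -⟩; exact (Set.notMem_empty x hx))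
      ?_ _ rfl
    intro x hx
    rw [Set.mem_singleton_iff] at hx
    subst hx; exact h3
  have h6 : Lit.neg (ExtAtom.base true) ∈ T := by
    refine apply_rule _ memIBnegt (by rintro ⟨x, hx, -⟩; exact (Set.notMem_empty x hx))
      ?_ _ rfl
    intro x hx
    rw [Set.mem_singleton_iff] at hx
    subst hx; exact h5
  refine Set.Subset.antisymm hT ?_
  intro x hx
  rcases (mem_Sw x).mp hx with rfl | rfl | rfl | rfl | rfl | rfl
  exacts [h1, h2, h3, h4, h5, h6]

lemma Sw_answer : IsAnswerSet (UpdProgram 2 Pseq) Sw :=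
  ⟨Sw_consistent, Sw_model, Sw_min⟩

lemma uas_seq : UpdateAnswerSet 2 Pseq {Lit.neg true, Lit.pos false} := by
  refine ⟨Sw, Sw_answer, ?_⟩
  ext L
  rcases L with a | a <;> cases a <;> simp [Sw, liftLit, raw]

lemma not_negbase (S' : Set (Lit (ExtAtom Bool)))
    (h : IsAnswerSet (UpdProgram 2 Pseq') S') :
    Lit.neg (ExtAtom.base true) ∉ S' := by
  obtain ⟨-, hmod, hmin⟩ := h
  intro hmem
  have hTmod : IsModel (S' \ {Lit.neg (ExtAtom.base true)})
      (Reduct (UpdProgram 2 Pseq') S') := by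
    rintro r ⟨r0, hr0, hnd, rfl⟩ hb
    have hbS : BodyTrue S' (Rule.mk r0.head r0.prem ∅) :=
      ⟨hb.1.trans Set.diff_subset, fun L h => absurd h (Set.notMem_empty L)⟩
    obtain ⟨L, hL, hLS⟩ := hmod _ ⟨r0, hr0, hnd, rfl⟩ hbS
    refine ⟨L, hL, hLS, ?_⟩
    rcases mem_upd_seq' hr0 with rfl | rfl | rfl | rfl | rfl | ⟨M, hM3, rfl | rfl⟩ <;>
        (injection hL with hL; subst hL)
    · simp
    · simp
    · simp
    · simp
    · simp
    · rcases hM3 with rfl | rfl | rfl <;> simp [idxLit]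
    · rcases hM3 with rfl | rfl | rfl <;> simp [liftLit]
  have heq := hmin _ Set.diff_subset hTmod
  rw [← heq] at hmem
  simp at hmem

lemma not_uas_seq' : ¬ UpdateAnswerSet 2 Pseq' {Lit.neg true, Lit.pos false} := by
  rintro ⟨S', hAS, hSet⟩
  have hmem : Lit.neg true ∈ ({Lit.neg true, Lit.pos false} : Set (Lit Bool)) := by
    simp
  rw [hSet] at hmem
  exact not_negbase S' hAS hmem

/-- The distinguishing rule: the constraint `← ¬a`. -/
def rdist : Rule Bool := ⟨none, {Lit.neg true}, ∅⟩

lemma rdist_mem' : rdist ∈ BelSeq 2 Pseq' := by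
  rintro S ⟨S', hAS, rfl⟩ hb
  exfalso
  have hmem : Lit.neg true ∈ {L | liftLit L ∈ S'} := hb.1 rfl
  exact not_negbase S' hAS hmem

lemma rdist_not_mem : rdist ∉ BelSeq 2 Pseq := by
  intro h
  obtain ⟨L, hL, -⟩ := h _ uas_seq
    ⟨by
      intro x hx
      obtain rfl : x = Lit.neg true := hx
      exact Set.mem_insert _ _,
     fun L h => absurd h (Set.notMem_empty L)⟩
  simp [rdist] at hL

lemma belSeq_ne : BelSeq 2 Pseq ≠ BelSeq 2 Pseq' := by
  intro heq
  exact rdist_not_mem (heq ▸ rdist_mem')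

end AuxK6

/-- syntax-independence (K6/U4) fails: `P_2 ≡ P_2'` (same
belief sets), yet the updated sequences have different belief sets; indeed
`{¬a, b}` is an update answer set of `(P_1,P_2)` but not of `(P_1,P_2')`. -/
theorem k6_u4_fail :
    Bel P2w = Bel P2w' ∧
    UpdateAnswerSet 2 (fun i => if i = 0 then P1w else P2w)
      {Lit.neg true, Lit.pos false} ∧
    ¬ UpdateAnswerSet 2 (fun i => if i = 0 then P1w else P2w')
      {Lit.neg true, Lit.pos false} ∧
    BelSeq 2 (fun i => if i = 0 then P1w else P2w) ≠
      BelSeq 2 (fun i => if i = 0 then P1w else P2w') :=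
  ⟨bel_eq_aux, uas_seq, not_uas_seq', belSeq_ne⟩
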